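/- Let f(x,y) = y^3 - P(x)y + Q(x) with P, Q nonzero formal power series over ℂ vanishing at 0. Then the Milnor number μ = dim_ℂ ℂ[[x,y]]/(f_x, f_y) equals the x-adic order of the power series 3 Q'(x)^2 - P(x) P'(x)^2, provided this power series is nonzero. -/

import Mathlib

set_option synthInstance.maxHeartbeats 1000000

open PowerSeries

set_option maxHeartbeats 1000000

noncomputable section
namespace MilnorAux

local notation "D" => PowerSeries ℂ
local notation "R" => PowerSeries (PowerSeries ℂ)

variable (c : D)

lemma coeff_mul_pow_zero (hc : constantCoeff c = 0) (a : D) {m k : ℕ} (h : m < k) :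
    coeff m (a * c ^ k) = 0 := by
  have hdvd : (X : D) ^ k ∣ a * c ^ k :=
    Dvd.dvd.mul_left (pow_dvd_pow_of_dvd (X_dvd_iff.mpr hc) k) a
  exact (X_pow_dvd_iff.mp hdvd) m h

/-- Partial sums `∑_{k<K} f_{j+2k} c^k`. -/
def T (f : R) (j K : ℕ) : D := ∑ k ∈ Finset.range K, coeff (j + 2*k) f * c ^ k

lemma coeff_T_stable (hc : constantCoeff c = 0) (f : R) (j : ℕ) {m K : ℕ} (h : m + 1 ≤ K) :
    coeff m (T c f j K) = coeff m (T c f j (m+1)) := by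
  unfold T
  rw [map_sum, map_sum]
  symm
  apply Finset.sum_subset (Finset.range_subset_range.mpr h)
  intro k hk hk'
  simp only [Finset.mem_range, not_lt] at hk'
  exact coeff_mul_pow_zero c hc _ (lt_of_lt_of_le (Nat.lt_succ_self m) hk')

lemma T_succ (f : R) (j K : ℕ) :
    T c f j (K+1) = coeff j f + c * T c f (j+2) K := by
  unfold T
  rw [Finset.sum_range_succ']
  rw [Finset.mul_sum]
  simp only [pow_zero, mul_one, mul_zero, add_zero]
  rw [add_comm]
  congr 1
  apply Finset.sum_congr rfl
  intro k _
  have : j + 2 * (k + 1) = j + 2 + 2 * k := by ring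
  rw [this, pow_succ]
  ring

/-- The quotient in division of `f` by `X^2 - C c`. -/
def qf (f : R) : R :=
  PowerSeries.mk fun n => PowerSeries.mk fun m => coeff m (T c f (n+2) (m+1))

/-- Remainder coefficient 0. -/
def r0 (f : R) : D := PowerSeries.mk fun m => coeff m (T c f 0 (m+1))

/-- Remainder coefficient 1. -/
def r1 (f : R) : D := PowerSeries.mk fun m => coeff m (T c f 1 (m+1))

lemma coeff_congr_mul {u v : D} (m : ℕ) (h : ∀ j ≤ m, coeff j u = coeff j v) :
    coeff m (c * u) = coeff m (c * v) := by
  rw [coeff_mul, coeff_mul]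
  apply Finset.sum_congr rfl
  intro p hp
  rw [Finset.HasAntidiagonal.mem_antidiagonal] at hp
  rw [h p.2 (by omega)]

lemma coeff_c_mul_T (hc : constantCoeff c = 0) (f : R) (j m : ℕ) :
    coeff m (c * PowerSeries.mk (fun i => coeff i (T c f j (i+1)))) =
      coeff m (c * T c f j (m+1)) := by
  apply coeff_congr_mul
  intro i hi
  rw [coeff_mk]
  exact (coeff_T_stable c hc f j (by omega)).symm

theorem div_eq (hc : constantCoeff c = 0) (f : R) :
    f = ((X : R)^2 - PowerSeries.C c) * qf c f
        + PowerSeries.C (r0 c f) + PowerSeries.C (r1 c f) * X := by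
  apply PowerSeries.ext
  intro n
  rw [map_add, map_add, sub_mul, map_sub, coeff_X_pow_mul', coeff_C_mul, coeff_C,
    ← pow_one (X : R), coeff_C_mul_X_pow]
  rcases n with _ | n
  · -- n = 0
    norm_num
    apply PowerSeries.ext
    intro m
    simp only [qf, r0, coeff_mk, map_neg, map_add]
    norm_num
    rw [coeff_c_mul_T c hc f 2 m]
    rw [← coeff_T_stable c hc f 0 (show m + 1 ≤ m + 2 by omega)]
    have h3 : m + 2 = m + 1 + 1 := rfl
    rw [h3, T_succ c f 0 (m+1), map_add, coeff_zero_eq_constantCoeff_apply]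
    ring
  · rcases n with _ | n
    · -- n = 1
      norm_num
      apply PowerSeries.ext
      intro m
      simp only [qf, r1, coeff_mk, map_neg, map_add]
      norm_num
      rw [coeff_c_mul_T c hc f 3 m]
      rw [← coeff_T_stable c hc f 1 (show m + 1 ≤ m + 2 by omega)]
      have h3 : m + 2 = m + 1 + 1 := rfl
      rw [h3, T_succ c f 1 (m+1), map_add]
      ring
    · -- n = n + 2
      rw [if_pos (by omega : 2 ≤ n + 1 + 1), if_neg (by omega : ¬ n + 1 + 1 = 0),
        if_neg (by omega : ¬ n + 1 + 1 = 1)]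
      apply PowerSeries.ext
      intro m
      rw [add_zero, add_zero, map_sub]
      simp only [qf, coeff_mk]
      rw [coeff_c_mul_T c hc f (n + 1 + 1 + 2) m]
      have h1 : n + 1 + 1 - 2 = n := by omega
      rw [h1, ← coeff_T_stable c hc f (n+2) (show m + 1 ≤ m + 2 by omega)]
      have h3 : m + 2 = m + 1 + 1 := rfl
      rw [h3, T_succ c f (n+2) (m+1), map_add]
      have h2 : n + 2 + 2 = n + 1 + 1 + 2 := by omega
      rw [h2]
      ring


lemma shift_rel (hc : constantCoeff c = 0) {w : R} {a b : D}
    (h : ((X : R)^2 - PowerSeries.C c) * w = PowerSeries.C a + PowerSeries.C b * X) :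
    ∀ k, coeff k w = c * coeff (k + 2) w := by
  intro k
  have h2 := congrArg (coeff (k + 2)) h
  rw [map_add, sub_mul, map_sub, coeff_X_pow_mul', coeff_C_mul, coeff_C,
    ← pow_one (X : R), coeff_C_mul_X_pow, if_pos (by omega : 2 ≤ k + 2),
    if_neg (by omega : ¬ k + 2 = 0), if_neg (by omega : ¬ k + 2 = 1)] at h2
  have h4 : k + 2 - 2 = k := by omega
  rw [h4, add_zero] at h2
  linear_combination h2

lemma pow_rel (hc : constantCoeff c = 0) {w : R} {a b : D}
    (h : ((X : R)^2 - PowerSeries.C c) * w = PowerSeries.C a + PowerSeries.C b * X) :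
    ∀ k j, coeff j w = c ^ k * coeff (j + 2 * k) w := by
  intro k
  induction k with
  | zero => intro j; simp
  | succ k ih =>
    intro j
    rw [ih j, shift_rel c hc h (j + 2 * k), pow_succ]
    have : j + 2 * k + 2 = j + 2 * (k + 1) := by omega
    rw [this]
    ring

lemma coeff_w_zero (hc : constantCoeff c = 0) {w : R} {a b : D}
    (h : ((X : R)^2 - PowerSeries.C c) * w = PowerSeries.C a + PowerSeries.C b * X) :
    ∀ j, coeff j w = 0 := by
  intro j
  apply PowerSeries.ext
  intro m
  rw [pow_rel c hc h (m + 1) j, mul_comm, map_zero]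
  exact coeff_mul_pow_zero c hc _ (by omega)

theorem unique_low (hc : constantCoeff c = 0) {w : R} {a b : D}
    (h : ((X : R)^2 - PowerSeries.C c) * w = PowerSeries.C a + PowerSeries.C b * X) :
    a = 0 ∧ b = 0 := by
  constructor
  · have h0 := congrArg (coeff 0) h
    rw [map_add, sub_mul, map_sub, coeff_X_pow_mul', coeff_C_mul, coeff_C,
      ← pow_one (X : R), coeff_C_mul_X_pow] at h0
    rw [coeff_w_zero c hc h 0] at h0
    simpa using h0.symm
  · have h1 := congrArg (coeff 1) h
    rw [map_add, sub_mul, map_sub, coeff_X_pow_mul', coeff_C_mul, coeff_C,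
      ← pow_one (X : R), coeff_C_mul_X_pow] at h1
    rw [coeff_w_zero c hc h 1] at h1
    simpa using h1.symm

theorem r_char (hc : constantCoeff c = 0) {f h : R} {a b : D}
    (hf : f = ((X : R)^2 - PowerSeries.C c) * h
        + PowerSeries.C a + PowerSeries.C b * X) :
    r0 c f = a ∧ r1 c f = b := by
  have hd := div_eq c hc f
  have key : ((X : R)^2 - PowerSeries.C c) * (h - qf c f)
      = PowerSeries.C (r0 c f - a) + PowerSeries.C (r1 c f - b) * X := by
    rw [map_sub, map_sub]
    have := hf.symm.trans hd
    ring_nf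
    ring_nf at this
    linear_combination this
  have h2 := unique_low c hc key
  exact ⟨sub_eq_zero.mp h2.1, sub_eq_zero.mp h2.2⟩


variable (pd qd : D)

lemma expand_mul (u v : D) :
    (PowerSeries.C u + PowerSeries.C v * X) * (PowerSeries.C qd - PowerSeries.C pd * X)
      = ((X : R)^2 - PowerSeries.C c) * (-(PowerSeries.C (v * pd)))
        + PowerSeries.C (u * qd - c * (v * pd))
        + PowerSeries.C (v * qd - u * pd) * X := by
  simp only [map_sub, map_mul]
  ring

theorem mem_span_iff (hc : constantCoeff c = 0) (f : R) :
    f ∈ Ideal.span ({PowerSeries.C qd - PowerSeries.C pd * X,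
        (X : R)^2 - PowerSeries.C c} : Set R)
      ↔ ∃ u v : D, r0 c f = u * qd - c * (v * pd) ∧ r1 c f = v * qd - u * pd := by
  constructor
  · intro hf
    obtain ⟨a, b, hab⟩ := Ideal.mem_span_pair.mp hf
    refine ⟨r0 c a, r1 c a, ?_⟩
    apply r_char c hc (h := qf c a * (PowerSeries.C qd - PowerSeries.C pd * X)
        + b - PowerSeries.C (r1 c a * pd))
    have ha := div_eq c hc a
    have hexp := expand_mul c pd qd (r0 c a) (r1 c a)
    linear_combination (-1 : R) * hab
      + (PowerSeries.C qd - PowerSeries.C pd * X) * ha + hexp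
  · rintro ⟨u, v, h0, h1⟩
    apply Ideal.mem_span_pair.mpr
    refine ⟨PowerSeries.C u + PowerSeries.C v * X, qf c f + PowerSeries.C (v * pd), ?_⟩
    have hd := div_eq c hc f
    have hexp := expand_mul c pd qd u v
    rw [h0] at hd
    rw [h1] at hd
    linear_combination hexp + (-1 : R) * hd

def Psi (hc : constantCoeff c = 0) : R →ₗ[ℂ] D × D where
  toFun f := (r0 c f, r1 c f)
  map_add' f g := by
    have h := r_char c hc (f := f + g) (h := qf c f + qf c g)
      (a := r0 c f + r0 c g) (b := r1 c f + r1 c g) (by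
        rw [map_add, map_add]
        linear_combination div_eq c hc f + div_eq c hc g)
    exact Prod.ext h.1 h.2
  map_smul' z f := by
    have h := r_char c hc (f := z • f)
      (h := PowerSeries.C (algebraMap ℂ D z) * qf c f)
      (a := algebraMap ℂ D z * r0 c f) (b := algebraMap ℂ D z * r1 c f) (by
        rw [Algebra.smul_def, PowerSeries.algebraMap_apply, map_mul, map_mul]
        linear_combination (PowerSeries.C (algebraMap ℂ D z)) * div_eq c hc f)
    simp only [RingHom.id_apply]
    refine Prod.ext ?_ ?_
    · show r0 c (z • f) = (z • (r0 c f, r1 c f)).1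
      rw [Prod.smul_fst, h.1, Algebra.smul_def]
    · show r1 c (z • f) = (z • (r0 c f, r1 c f)).2
      rw [Prod.smul_snd, h.2, Algebra.smul_def]

lemma Psi_const (hc : constantCoeff c = 0) (a b : D) :
    Psi c hc (PowerSeries.C a + PowerSeries.C b * X) = (a, b) := by
  have h := r_char c hc (f := PowerSeries.C a + PowerSeries.C b * X) (h := 0)
    (a := a) (b := b) (by ring)
  exact Prod.ext h.1 h.2

/-- The column-span submodule. -/
def Ncol : Submodule D (D × D) :=
  Submodule.span (PowerSeries ℂ) {((qd, -pd) : D × D), ((-(c*pd), qd) : D × D)}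

lemma psi_mem_iff (hc : constantCoeff c = 0) (f : R) :
    f ∈ Ideal.span ({PowerSeries.C qd - PowerSeries.C pd * X,
        (X : R)^2 - PowerSeries.C c} : Set R)
      ↔ Psi c hc f ∈ Ncol c pd qd := by
  rw [mem_span_iff c pd qd hc f]
  unfold Ncol
  rw [Submodule.mem_span_pair]
  constructor
  · rintro ⟨u, v, h0, h1⟩
    refine ⟨u, v, ?_⟩
    show (u • qd + v • (-(c*pd)), u • (-pd) + v • qd) = Psi c hc f
    show (u • qd + v • (-(c*pd)), u • (-pd) + v • qd) = (r0 c f, r1 c f)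
    rw [h0, h1]
    simp only [smul_eq_mul]
    refine Prod.ext ?_ ?_ <;> ring
  · rintro ⟨u, v, h⟩
    refine ⟨u, v, ?_, ?_⟩
    · have := congrArg Prod.fst h
      rw [show Psi c hc f = (r0 c f, r1 c f) from rfl] at this
      simp at this
      linear_combination -this
    · have := congrArg Prod.snd h
      rw [show Psi c hc f = (r0 c f, r1 c f) from rfl] at this
      simp only [smul_eq_mul] at this
      simp at this
      linear_combination -this

def bigEquiv (hc : constantCoeff c = 0) :
    (R ⧸ Ideal.span ({PowerSeries.C qd - PowerSeries.C pd * X,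
        (X : R)^2 - PowerSeries.C c} : Set R))
      ≃ₗ[ℂ] ((D × D) ⧸ (Ncol c pd qd).restrictScalars ℂ) := by
  set I : Ideal R := Ideal.span ({PowerSeries.C qd - PowerSeries.C pd * X,
        (X : R)^2 - PowerSeries.C c} : Set R) with hI
  let Nc := (Ncol c pd qd).restrictScalars ℂ
  let φ : R →ₗ[ℂ] ((D × D) ⧸ Nc) := Nc.mkQ.comp (Psi c hc)
  have hker : ∀ f : R, φ f = 0 ↔ f ∈ I := by
    intro f
    show Nc.mkQ (Psi c hc f) = 0 ↔ _
    rw [Submodule.mkQ_apply, Submodule.Quotient.mk_eq_zero]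
    rw [Submodule.restrictScalars_mem]
    exact (psi_mem_iff c pd qd hc f).symm
  have hle : I.restrictScalars ℂ ≤ LinearMap.ker φ := by
    intro x hx
    rw [LinearMap.mem_ker]
    exact (hker x).mpr hx
  let lift := Submodule.liftQ (I.restrictScalars ℂ) φ hle
  have hinj : Function.Injective lift := by
    rw [← LinearMap.ker_eq_bot]
    apply Submodule.ker_liftQ_eq_bot
    intro x hx
    rw [LinearMap.mem_ker] at hx
    exact (hker x).mp hx
  have hsurj : Function.Surjective lift := by
    intro y
    obtain ⟨⟨a, b⟩, rfl⟩ := Submodule.Quotient.mk_surjective Nc y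
    refine ⟨Submodule.Quotient.mk (PowerSeries.C a + PowerSeries.C b * X), ?_⟩
    show φ _ = _
    show Nc.mkQ (Psi c hc _) = _
    rw [Psi_const c hc a b, Submodule.mkQ_apply]
  exact (Submodule.Quotient.restrictScalarsEquiv ℂ I).symm.trans
    (LinearEquiv.ofBijective lift ⟨hinj, hsurj⟩)

/-- Quotient of `ℂ[[x]]` by `(X^m)` as a `ℂ`-module. -/
abbrev quotXpow (m : ℕ) :=
  D ⧸ (Submodule.span (PowerSeries ℂ) {(X : D)^m}).restrictScalars ℂ

def coeffsMap (m : ℕ) : D →ₗ[ℂ] (Fin m → ℂ) where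
  toFun v := fun i => coeff i v
  map_add' u v := by funext i; simp
  map_smul' z v := by funext i; simp

lemma mem_spanXpow_iff (m : ℕ) (v : D) :
    v ∈ (Submodule.span (PowerSeries ℂ) {(X : D)^m}).restrictScalars ℂ
      ↔ ∀ i < m, coeff i v = 0 := by
  rw [Submodule.restrictScalars_mem, Submodule.mem_span_singleton]
  constructor
  · rintro ⟨w, rfl⟩
    intro i hi
    rw [smul_eq_mul, mul_comm]
    exact X_pow_dvd_iff.mp (Dvd.intro w rfl) i hi
  · intro hcoef
    obtain ⟨w, hw⟩ := X_pow_dvd_iff.mpr hcoef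
    exact ⟨w, by rw [smul_eq_mul, mul_comm, ← hw]⟩

def quotXpowEquiv (m : ℕ) : quotXpow m ≃ₗ[ℂ] (Fin m → ℂ) := by
  have hle : (Submodule.span (PowerSeries ℂ) {(X : D)^m}).restrictScalars ℂ
      ≤ LinearMap.ker (coeffsMap m) := by
    intro v hv
    rw [LinearMap.mem_ker]
    funext i
    exact (mem_spanXpow_iff m v).mp hv i i.2
  refine LinearEquiv.ofBijective
    (Submodule.liftQ _ (coeffsMap m) hle) ⟨?_, ?_⟩
  · rw [← LinearMap.ker_eq_bot]
    apply Submodule.ker_liftQ_eq_bot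
    intro v hv
    rw [LinearMap.mem_ker] at hv
    rw [mem_spanXpow_iff]
    intro i hi
    exact congrFun hv ⟨i, hi⟩
  · intro w
    refine ⟨Submodule.Quotient.mk (PowerSeries.mk fun i => if h : i < m then w ⟨i, h⟩ else 0), ?_⟩
    rw [Submodule.liftQ_apply]
    funext i
    simp only [coeffsMap, LinearMap.coe_mk, AddHom.coe_mk, coeff_mk]
    rw [dif_pos i.2]

instance quotXpow_finite (m : ℕ) : FiniteDimensional ℂ (quotXpow m) :=
  Module.Finite.equiv (quotXpowEquiv m).symm

lemma finrank_quotXpow (m : ℕ) : Module.finrank ℂ (quotXpow m) = m := by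
  rw [LinearEquiv.finrank_eq (quotXpowEquiv m)]
  simp

/-- ℂ-linear "divide by X^n, discard remainder". -/
def Ed (n : ℕ) : D →ₗ[ℂ] D where
  toFun v := PowerSeries.mk fun i => coeff (i + n) v
  map_add' u v := by
    apply PowerSeries.ext; intro i; simp [coeff_mk]
  map_smul' z v := by
    apply PowerSeries.ext; intro i; simp [coeff_mk]

lemma Ed_X_pow_mul (n : ℕ) (w : D) : Ed n ((X : D)^n * w) = w := by
  apply PowerSeries.ext
  intro i
  show coeff i (PowerSeries.mk fun i => coeff (i + n) ((X : D)^n * w)) = _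
  rw [coeff_mk, coeff_X_pow_mul]

def Theta (m n : ℕ) (b : D) : (D × D) →ₗ[ℂ] (quotXpow m) × (quotXpow n) where
  toFun z := (Submodule.Quotient.mk (z.1 - Ed n z.2 * b), Submodule.Quotient.mk z.2)
  map_add' z w := by
    refine Prod.ext ?_ ?_
    · simp only [Prod.fst_add, Prod.snd_add]
      rw [map_add]
      rw [show (z.1 + w.1 - (Ed n z.2 + Ed n w.2) * b)
        = (z.1 - Ed n z.2 * b) + (w.1 - Ed n w.2 * b) by ring]
      rw [Submodule.Quotient.mk_add]
    · simp only [Prod.fst_add, Prod.snd_add]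
      rw [Submodule.Quotient.mk_add]
  map_smul' t z := by
    dsimp only [RingHom.id_apply]
    refine Prod.ext ?_ ?_
    · rw [Prod.smul_fst, Prod.smul_snd, map_smul]
      rw [show (t • z.1 - (t • Ed n z.2) * b) = t • (z.1 - Ed n z.2 * b) by
        rw [smul_sub, smul_mul_assoc]]
      rw [Submodule.Quotient.mk_smul, Prod.smul_fst]
    · rw [Prod.smul_snd, Submodule.Quotient.mk_smul, Prod.smul_snd]

lemma theta_ker (m n : ℕ) (b : D) :
    LinearMap.ker (Theta m n b)
      = (Submodule.span (PowerSeries ℂ)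
          {(((X : D)^m, 0) : D × D), ((b, (X : D)^n) : D × D)}).restrictScalars ℂ := by
  ext z
  rw [LinearMap.mem_ker, Submodule.restrictScalars_mem, Submodule.mem_span_pair]
  constructor
  · intro hz
    have h1 : Submodule.Quotient.mk (p := (Submodule.span (PowerSeries ℂ)
        {(X : D)^m}).restrictScalars ℂ) (z.1 - Ed n z.2 * b) = 0 := congrArg Prod.fst hz
    have h2 : Submodule.Quotient.mk (p := (Submodule.span (PowerSeries ℂ)
        {(X : D)^n}).restrictScalars ℂ) z.2 = 0 := congrArg Prod.snd hz
    rw [Submodule.Quotient.mk_eq_zero, Submodule.restrictScalars_mem,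
      Submodule.mem_span_singleton] at h1 h2
    obtain ⟨w, hw⟩ := h2
    obtain ⟨s, hs⟩ := h1
    refine ⟨s, w, ?_⟩
    have hEd : Ed n z.2 = w := by
      rw [← hw, smul_eq_mul, mul_comm, Ed_X_pow_mul]
    refine Prod.ext ?_ ?_
    · show s • (X : D)^m + w • b = z.1
      rw [smul_eq_mul, smul_eq_mul, ← hEd]
      have := hs
      rw [smul_eq_mul] at this
      linear_combination this
    · show s • (0:D) + w • (X : D)^n = z.2
      rw [smul_zero, zero_add, ← hw]
  · rintro ⟨u, v, rfl⟩
    have harg : u • (((X : D)^m, 0) : D × D) + v • ((b, (X : D)^n) : D × D)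
        = ((u * (X : D)^m + v * b, v * (X : D)^n) : D × D) := by
      refine Prod.ext ?_ ?_ <;> simp [smul_eq_mul]
    rw [harg]
    show ((Submodule.Quotient.mk (u * (X : D)^m + v * b - Ed n (v * (X:D)^n) * b) : quotXpow m),
      (Submodule.Quotient.mk (v * (X:D)^n) : quotXpow n)) = 0
    rw [Prod.mk_eq_zero]
    constructor
    · rw [show v * (X : D)^n = (X : D)^n * v by ring, Ed_X_pow_mul]
      rw [show u * (X:D)^m + v*b - v*b = u * (X:D)^m by ring]
      rw [Submodule.Quotient.mk_eq_zero]
      rw [Submodule.restrictScalars_mem, Submodule.mem_span_singleton]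
      exact ⟨u, by rw [smul_eq_mul]⟩
    · rw [Submodule.Quotient.mk_eq_zero]
      rw [Submodule.restrictScalars_mem, Submodule.mem_span_singleton]
      exact ⟨v, by rw [smul_eq_mul]⟩

lemma theta_surj (m n : ℕ) (b : D) : Function.Surjective (Theta m n b) := by
  intro y
  obtain ⟨u0, hu⟩ := Submodule.Quotient.mk_surjective _ y.1
  obtain ⟨v0, hv⟩ := Submodule.Quotient.mk_surjective _ y.2
  refine ⟨(u0 + Ed n v0 * b, v0), ?_⟩
  refine Prod.ext ?_ ?_
  · show Submodule.Quotient.mk (u0 + Ed n v0 * b - Ed n v0 * b) = y.1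
    rw [show u0 + Ed n v0 * b - Ed n v0 * b = u0 by ring, hu]
  · exact hv

def pairQuotEquiv (m n : ℕ) (b : D) :
    ((D × D) ⧸ (Submodule.span (PowerSeries ℂ)
        {(((X : D)^m, 0) : D × D), ((b, (X : D)^n) : D × D)}).restrictScalars ℂ)
      ≃ₗ[ℂ] (quotXpow m) × (quotXpow n) := by
  refine LinearEquiv.ofBijective
    (Submodule.liftQ _ (Theta m n b) (le_of_eq (theta_ker m n b).symm)) ⟨?_, ?_⟩
  · rw [← LinearMap.ker_eq_bot]
    exact Submodule.ker_liftQ_eq_bot _ _ _ (le_of_eq (theta_ker m n b))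
  · intro y
    obtain ⟨z, hz⟩ := theta_surj m n b y
    exact ⟨Submodule.Quotient.mk z, by rw [Submodule.liftQ_apply, hz]⟩

lemma finrank_pairQuot (m n : ℕ) (b : D) :
    Module.finrank ℂ ((D × D) ⧸ (Submodule.span (PowerSeries ℂ)
        {(((X : D)^m, 0) : D × D), ((b, (X : D)^n) : D × D)}).restrictScalars ℂ)
      = m + n := by
  rw [LinearEquiv.finrank_eq (pairQuotEquiv m n b)]
  rw [Module.finrank_prod, finrank_quotXpow, finrank_quotXpow]

lemma exists_unit_decomp {a : D} (ha : a ≠ 0) :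
    ∃ (m : ℕ) (δ : D), a = (X : D)^m * δ ∧ constantCoeff δ ≠ 0 ∧ a.order = (m : ℕ∞) := by
  have hfin : a.order ≠ ⊤ := by
    rw [← lt_top_iff_ne_top, PowerSeries.order_finite_iff_ne_zero]
    exact ha
  obtain ⟨m, hm⟩ : ∃ m : ℕ, a.order = (m : ℕ∞) := by
    cases h : a.order with
    | top => exact absurd h hfin
    | coe m => exact ⟨m, rfl⟩
  have h1 := PowerSeries.order_eq_nat.mp hm
  obtain ⟨δ, hδ⟩ := X_pow_dvd_iff.mpr h1.2
  refine ⟨m, δ, hδ, ?_, hm⟩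
  intro h0
  apply h1.1
  rw [hδ]
  have h2 := coeff_X_pow_mul δ m 0
  rw [zero_add] at h2
  rw [h2, coeff_zero_eq_constantCoeff_apply, h0]

lemma dvd_or_dvd {a b : D} (ha : a ≠ 0) (hb : b ≠ 0) : (∃ t, b = a * t) ∨ (∃ s, a = b * s) := by
  obtain ⟨m, δ, h1, h2, _⟩ := exists_unit_decomp ha
  obtain ⟨n, ε, h3, h4, _⟩ := exists_unit_decomp hb
  rcases le_total m n with h | h
  · left
    refine ⟨δ⁻¹ * ((X : D)^(n - m) * ε), ?_⟩
    have hd : δ * δ⁻¹ = 1 := PowerSeries.mul_inv_cancel δ h2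
    calc b = (X : D)^(m + (n - m)) * ε := by rw [show m + (n-m) = n by omega, h3]
    _ = ((X : D)^m * (X : D)^(n-m)) * ε := by rw [pow_add]
    _ = ((X : D)^m * δ) * (δ⁻¹ * ((X : D)^(n-m) * ε)) := by
        rw [show ((X : D)^m * δ) * (δ⁻¹ * ((X : D)^(n-m) * ε))
          = (δ * δ⁻¹) * ((X : D)^m * (X : D)^(n-m) * ε) by ring, hd, one_mul]
    _ = a * (δ⁻¹ * ((X : D)^(n-m) * ε)) := by rw [← h1]
  · right
    refine ⟨ε⁻¹ * ((X : D)^(m - n) * δ), ?_⟩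
    have hd : ε * ε⁻¹ = 1 := PowerSeries.mul_inv_cancel ε h4
    calc a = (X : D)^(n + (m - n)) * δ := by rw [show n + (m-n) = m by omega, h1]
    _ = ((X : D)^n * (X : D)^(m-n)) * δ := by rw [pow_add]
    _ = ((X : D)^n * ε) * (ε⁻¹ * ((X : D)^(m-n) * δ)) := by
        rw [show ((X : D)^n * ε) * (ε⁻¹ * ((X : D)^(m-n) * δ))
          = (ε * ε⁻¹) * ((X : D)^n * (X : D)^(m-n) * δ) by ring, hd, one_mul]
    _ = b * (ε⁻¹ * ((X : D)^(m-n) * δ)) := by rw [← h3]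

lemma order_eq_zero_of_const {u : D} (h : constantCoeff u ≠ 0) : u.order = 0 := by
  rw [show (0 : ℕ∞) = ((0 : ℕ) : ℕ∞) from rfl, PowerSeries.order_eq_nat]
  constructor
  · rw [coeff_zero_eq_constantCoeff_apply]; exact h
  · omega

lemma finrank_span_pair (a b d : D) (ha : a ≠ 0) (hd : d ≠ 0) :
    (Module.finrank ℂ ((D × D) ⧸ (Submodule.span (PowerSeries ℂ)
        {((a, 0) : D × D), ((b, d) : D × D)}).restrictScalars ℂ) : ℕ∞)
      = a.order + d.order := by
  obtain ⟨m, δ, hδeq, hδ0, hma⟩ := exists_unit_decomp ha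
  obtain ⟨n, ε, hεeq, hε0, hnd⟩ := exists_unit_decomp hd
  have hδu : δ * δ⁻¹ = 1 := PowerSeries.mul_inv_cancel δ hδ0
  have hεu : ε * ε⁻¹ = 1 := PowerSeries.mul_inv_cancel ε hε0
  have hspan : Submodule.span (PowerSeries ℂ) {((a, 0) : D × D), ((b, d) : D × D)}
      = Submodule.span (PowerSeries ℂ)
          {(((X : D)^m, 0) : D × D), ((ε⁻¹ * b, (X : D)^n) : D × D)} := by
    apply le_antisymm <;> rw [Submodule.span_le] <;> rintro z (rfl | rfl)
    · apply Submodule.mem_span_pair.mpr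
      refine ⟨δ, 0, ?_⟩
      refine Prod.ext ?_ ?_ <;> simp [smul_eq_mul]
      rw [hδeq]; ring
    · apply Submodule.mem_span_pair.mpr
      refine ⟨0, ε, ?_⟩
      refine Prod.ext ?_ ?_ <;> simp [smul_eq_mul]
      · rw [show ε * (ε⁻¹ * b) = (ε * ε⁻¹) * b by ring, hεu, one_mul]
      · rw [hεeq]; ring
    · apply Submodule.mem_span_pair.mpr
      refine ⟨δ⁻¹, 0, ?_⟩
      refine Prod.ext ?_ ?_ <;> simp [smul_eq_mul]
      rw [hδeq, show δ⁻¹ * ((X:D)^m * δ) = (δ * δ⁻¹) * (X:D)^m by ring, hδu, one_mul]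
    · apply Submodule.mem_span_pair.mpr
      refine ⟨0, ε⁻¹, ?_⟩
      refine Prod.ext ?_ ?_ <;> simp [smul_eq_mul]
      rw [hεeq, show ε⁻¹ * ((X:D)^n * ε) = (ε * ε⁻¹) * (X:D)^n by ring, hεu, one_mul]
  rw [hspan, finrank_pairQuot m n (ε⁻¹ * b), hma, hnd]
  push_cast
  rfl

lemma pair_comb (u v x y z w : D) :
    u • ((x, y) : D × D) + v • ((z, w) : D × D) = ((u*x + v*z, u*y + v*w) : D × D) := by
  refine Prod.ext ?_ ?_ <;> simp [smul_eq_mul]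

lemma deriv_ne_zero {f : D} (hf : f ≠ 0) (h0 : constantCoeff f = 0) :
    PowerSeries.derivativeFun f ≠ 0 := by
  intro h
  apply hf
  apply PowerSeries.ext
  intro n
  rcases n with _ | n
  · rw [coeff_zero_eq_constantCoeff_apply, h0, map_zero]
  · have := congrArg (coeff n) h
    rw [show f.derivativeFun = PowerSeries.derivative ℂ f from rfl,
      PowerSeries.coeff_derivative, map_zero] at this
    rcases mul_eq_zero.mp this with h1 | h1
    · rw [h1, map_zero]
    · exfalso
      have h2 : ((n + 1 : ℕ) : ℂ) = 0 := by push_cast; linear_combination h1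
      rw [Nat.cast_eq_zero] at h2
      omega

end MilnorAux
end


/-- For `f(x,y) = y^3 - P(x) y + Q(x)` with `P, Q` nonzero power series
vanishing at `0`, viewing `ℂ[[x,y]]` as `ℂ[[x]][[y]]` with `x` the inner and
`y` the outer variable, the Milnor number `dim_ℂ ℂ[[x,y]]/(f_x, f_y)` (with
`f_x = -P' y + Q'` and `f_y = 3 y^2 - P`) equals the x-adic order of
`3 Q'^2 - P P'^2`, provided the latter is nonzero. -/
theorem milnor_number_eq_order (P Q : PowerSeries ℂ) (hP : P ≠ 0) (hQ : Q ≠ 0)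
    (hP0 : PowerSeries.constantCoeff (R := ℂ) P = 0)
    (hQ0 : PowerSeries.constantCoeff (R := ℂ) Q = 0)
    (g : PowerSeries ℂ)
    (hg : g = 3 * (PowerSeries.derivativeFun Q) ^ 2
        - P * (PowerSeries.derivativeFun P) ^ 2)
    (hgne : g ≠ 0)
    (fx fy : PowerSeries (PowerSeries ℂ))
    (hfx : fx = PowerSeries.C (R := PowerSeries ℂ) (-(PowerSeries.derivativeFun P))
          * PowerSeries.X
        + PowerSeries.C (R := PowerSeries ℂ) (PowerSeries.derivativeFun Q))
    (hfy : fy = 3 * PowerSeries.X ^ 2 - PowerSeries.C (R := PowerSeries ℂ) P) :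
    (Module.finrank ℂ
        (PowerSeries (PowerSeries ℂ) ⧸
          Ideal.span ({fx, fy} : Set (PowerSeries (PowerSeries ℂ)))) : ℕ∞)
      = g.order := by
  set P' := PowerSeries.derivativeFun P with hP'def
  set Q' := PowerSeries.derivativeFun Q with hQ'def
  set c : PowerSeries ℂ := PowerSeries.C (R := ℂ) (3⁻¹ : ℂ) * P with hcdef
  have hc : PowerSeries.constantCoeff (R := ℂ) c = 0 := by
    rw [hcdef, map_mul, hP0, mul_zero]
  have h3 : (3 : PowerSeries ℂ) = PowerSeries.C (R := ℂ) (3 : ℂ) := by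
    rw [map_ofNat]
  have h3c : (3 : PowerSeries ℂ) * c = P := by
    rw [hcdef, h3, ← mul_assoc, ← map_mul]
    norm_num
  have hP' : P' ≠ 0 := MilnorAux.deriv_ne_zero hP hP0
  have hQ' : Q' ≠ 0 := MilnorAux.deriv_ne_zero hQ hQ0
  have hfx' : fx = PowerSeries.C (R := PowerSeries ℂ) Q'
      - PowerSeries.C (R := PowerSeries ℂ) P' * PowerSeries.X := by
    rw [hfx, map_neg]; ring
  have h3R : (3 : PowerSeries (PowerSeries ℂ))
      = PowerSeries.C (R := PowerSeries ℂ) (3 : PowerSeries ℂ) := by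
    rw [map_ofNat]
  have hfyw : (3 : PowerSeries (PowerSeries ℂ))
      * ((PowerSeries.X : PowerSeries (PowerSeries ℂ))^2 - PowerSeries.C (R := PowerSeries ℂ) c)
      = fy := by
    rw [hfy, mul_sub, h3R, ← map_mul, h3c]
  have hspan : Ideal.span ({fx, fy} : Set (PowerSeries (PowerSeries ℂ)))
      = Ideal.span ({PowerSeries.C (R := PowerSeries ℂ) Q'
          - PowerSeries.C (R := PowerSeries ℂ) P' * PowerSeries.X,
          (PowerSeries.X : PowerSeries (PowerSeries ℂ))^2
            - PowerSeries.C (R := PowerSeries ℂ) c} : Set (PowerSeries (PowerSeries ℂ))) := by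
    apply le_antisymm
    · rw [Ideal.span_le]
      rintro z hz
      simp only [Set.mem_insert_iff, Set.mem_singleton_iff] at hz
      rcases hz with rfl | rfl
      · rw [hfx']
        exact Ideal.subset_span (by simp)
      · exact Ideal.mem_span_pair.mpr ⟨0, 3, by rw [zero_mul, zero_add, hfyw]⟩
    · rw [Ideal.span_le]
      rintro z hz
      simp only [Set.mem_insert_iff, Set.mem_singleton_iff] at hz
      rcases hz with rfl | rfl
      · rw [← hfx']
        exact Ideal.subset_span (by simp)
      · apply Ideal.mem_span_pair.mpr
        refine ⟨0, PowerSeries.C (R := PowerSeries ℂ) (PowerSeries.C (R := ℂ) (3⁻¹ : ℂ)), ?_⟩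
        rw [zero_mul, zero_add, ← hfyw, ← mul_assoc]
        have hone : PowerSeries.C (R := PowerSeries ℂ) (PowerSeries.C (R := ℂ) (3⁻¹ : ℂ))
            * (3 : PowerSeries (PowerSeries ℂ)) = 1 := by
          rw [h3R, h3, ← map_mul, ← map_mul]
          norm_num
        rw [hone, one_mul]
  rw [hspan, LinearEquiv.finrank_eq (MilnorAux.bigEquiv c P' Q' hc)]
  have hdet3 : g = 3 * (Q' * Q' - c * (P' * P')) := by
    rw [hg, ← h3c]; ring
  have hdetne : Q' * Q' - c * (P' * P') ≠ 0 := by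
    intro h0; apply hgne; rw [hdet3, h0, mul_zero]
  have h3ord : (3 : PowerSeries ℂ).order = 0 :=
    MilnorAux.order_eq_zero_of_const (by rw [h3, PowerSeries.constantCoeff_C]; norm_num)
  rcases MilnorAux.dvd_or_dvd hQ' hP' with ⟨t, ht⟩ | ⟨s, hs⟩
  · -- P' = Q' * t
    have had : (Q' - t * (c * P')) * Q' = Q' * Q' - c * (P' * P') := by
      linear_combination (c * P') * ht
    have ha : Q' - t * (c * P') ≠ 0 := by
      intro h0
      apply hdetne
      rw [← had, h0, zero_mul]
    have hNcol : MilnorAux.Ncol c P' Q' = Submodule.span (PowerSeries ℂ)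
        {((Q' - t * (c * P'), 0) : PowerSeries ℂ × PowerSeries ℂ),
         ((-(c * P'), Q') : PowerSeries ℂ × PowerSeries ℂ)} := by
      unfold MilnorAux.Ncol
      apply le_antisymm <;> rw [Submodule.span_le] <;> rintro z hz <;>
        simp only [Set.mem_insert_iff, Set.mem_singleton_iff] at hz <;>
        rcases hz with rfl | rfl <;> apply Submodule.mem_span_pair.mpr
      · refine ⟨1, -t, ?_⟩
        rw [MilnorAux.pair_comb, Prod.mk.injEq]
        refine ⟨by ring, by linear_combination ht⟩
      · exact ⟨0, 1, by rw [MilnorAux.pair_comb, Prod.mk.injEq]; constructor <;> ring⟩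
      · refine ⟨1, t, ?_⟩
        rw [MilnorAux.pair_comb, Prod.mk.injEq]
        refine ⟨by ring, by linear_combination -ht⟩
      · exact ⟨0, 1, by rw [MilnorAux.pair_comb, Prod.mk.injEq]; constructor <;> ring⟩
    rw [hNcol, MilnorAux.finrank_span_pair _ _ _ ha hQ']
    have hg2 : g = 3 * ((Q' - t * (c * P')) * Q') := by rw [hdet3, had]
    rw [hg2, PowerSeries.order_mul, PowerSeries.order_mul, h3ord, zero_add]
  · -- Q' = P' * s
    have had : (s * Q' - c * P') * (-P') = -(Q' * Q' - c * (P' * P')) := by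
      linear_combination Q' * hs
    have ha : s * Q' - c * P' ≠ 0 := by
      intro h0
      apply hdetne
      have := had
      rw [h0, zero_mul] at this
      exact neg_eq_zero.mp this.symm
    have hd : -P' ≠ 0 := neg_ne_zero.mpr hP'
    have hNcol : MilnorAux.Ncol c P' Q' = Submodule.span (PowerSeries ℂ)
        {((s * Q' - c * P', 0) : PowerSeries ℂ × PowerSeries ℂ),
         ((Q', -P') : PowerSeries ℂ × PowerSeries ℂ)} := by
      unfold MilnorAux.Ncol
      apply le_antisymm <;> rw [Submodule.span_le] <;> rintro z hz <;>
        simp only [Set.mem_insert_iff, Set.mem_singleton_iff] at hz <;>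
        rcases hz with rfl | rfl <;> apply Submodule.mem_span_pair.mpr
      · exact ⟨0, 1, by rw [MilnorAux.pair_comb, Prod.mk.injEq]; constructor <;> ring⟩
      · refine ⟨1, -s, ?_⟩
        rw [MilnorAux.pair_comb, Prod.mk.injEq]
        refine ⟨by ring, by linear_combination -hs⟩
      · refine ⟨s, 1, ?_⟩
        rw [MilnorAux.pair_comb, Prod.mk.injEq]
        refine ⟨by ring, by linear_combination hs⟩
      · exact ⟨1, 0, by rw [MilnorAux.pair_comb, Prod.mk.injEq]; constructor <;> ring⟩
    rw [hNcol, MilnorAux.finrank_span_pair _ _ _ ha hd]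
    have hg2 : g = (-3) * ((s * Q' - c * P') * (-P')) := by
      rw [had, hdet3]; ring
    have hneg3ord : ((-3 : PowerSeries ℂ)).order = 0 := by
      apply MilnorAux.order_eq_zero_of_const
      rw [map_neg, h3, PowerSeries.constantCoeff_C]
      norm_num
    rw [hg2, PowerSeries.order_mul, PowerSeries.order_mul, hneg3ord, zero_add]
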